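/- For the kernel K(z) = log|1 - z| + Re(z), there is a numerical constant C > 0 such that K(z) ≤ C·|z|²/(1 + |z|) for all z ∈ ℂ. -/

import Mathlib

/-- For the kernel `K(z) = log|1-z| + Re z` there is a numerical constant `C > 0`
with `K(z) ≤ C·|z|²/(1+|z|)` for all `z ∈ ℂ`. -/
theorem stmt_1 : ∃ C : ℝ, 0 < C ∧ ∀ z : ℂ,
    Real.log (‖1 - z‖) + z.re ≤ C * ‖z‖ ^ 2 / (1 + ‖z‖) := by
  refine ⟨4, by norm_num, fun z => ?_⟩
  set a := ‖z‖ with ha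
  have ha0 : 0 ≤ a := norm_nonneg z
  have h1a : (0:ℝ) < 1 + a := by linarith
  have hre : z.re ≤ a := Complex.re_le_norm z
  rw [le_div_iff₀ h1a]
  rcases le_or_gt 1 a with h | h
  · -- large case: log|1-z| ≤ a
    have htri : ‖1 - z‖ ≤ 1 + a := by
      calc ‖1 - z‖ ≤ ‖(1:ℂ)‖ + ‖-z‖ := by
            simpa [sub_eq_add_neg] using norm_add_le (1:ℂ) (-z)
        _ = 1 + a := by simp [ha]
    have hlog : Real.log (‖1 - z‖) ≤ a := by
      have h2 : Real.log (‖1 - z‖) ≤ Real.log (1 + a) := by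
        rcases eq_or_lt_of_le (norm_nonneg (1 - z)) with h0 | h0
        · rw [← h0, Real.log_zero]
          exact Real.log_nonneg (by linarith)
        · exact Real.log_le_log h0 htri
      have h3 := Real.log_le_sub_one_of_pos h1a
      linarith
    nlinarith [mul_le_mul_of_nonneg_right (add_le_add hlog hre) h1a.le]
  · -- small case: |z| < 1, so |1-z| > 0
    have habs : 1 - a ≤ ‖1 - z‖ := by
      have := norm_sub_norm_le (1:ℂ) z
      simpa using this
    have hpos : 0 < ‖1 - z‖ := lt_of_lt_of_le (by linarith) habs
    have hsq : (‖1 - z‖) ^ 2 = 1 - 2 * z.re + a ^ 2 := by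
      rw [Complex.sq_norm, Complex.normSq_apply, ha, Complex.sq_norm, Complex.normSq_apply]
      simp [Complex.sub_re, Complex.sub_im]
      ring
    have hlog2 : Real.log ((‖1 - z‖) ^ 2) ≤ (‖1 - z‖) ^ 2 - 1 :=
      Real.log_le_sub_one_of_pos (by positivity)
    rw [Real.log_pow] at hlog2
    have hK : Real.log (‖1 - z‖) + z.re ≤ a ^ 2 / 2 := by
      rw [hsq] at hlog2
      push_cast at hlog2
      linarith
    nlinarith [mul_le_mul_of_nonneg_right hK h1a.le, sq_nonneg a]
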